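/- Let f* ∈ H be a best simultaneous approximation (BSA) to the family {f_a}_{a∈A} from H. Then for some positive integer k with 1 ≤ k ≤ n+1 there exist a₁,…,a_k ∈ A, x₁,…,x_k ∈ X and positive real numbers λ₁,…,λ_k with λ₁+⋯+λ_k = 1 such that: (i) Σ_{i=1}^{k} λᵢ ‖f_{aᵢ}(xᵢ) − f*(xᵢ)‖ ≤ Σ_{i=1}^{k} λᵢ ‖f_{aᵢ}(xᵢ) − f(xᵢ)‖ for all f ∈ H; and (ii) ‖f_{aᵢ}(xᵢ) − f*(xᵢ)‖ = |||f_{aᵢ} − f*||| = max_{a∈A} |||f_a − f*||| for all i with 1 ≤ i ≤ k. -/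

import Mathlib

open Filter Topology Metric

/-- Evaluation `(p, g) ↦ g (w p)` is continuous on `univ ×ˢ (unit ball of the weak dual)`. -/
private lemma bsaAux_continuousOn_eval {P : Type*} [TopologicalSpace P]
    {Y : Type*} [NormedAddCommGroup Y] [NormedSpace ℝ Y]
    (w : P → Y) (hw : Continuous w) :
    ContinuousOn (fun q : P × WeakDual ℝ Y => q.2 (w q.1))
      (Set.univ ×ˢ (WeakDual.toStrongDual ⁻¹' closedBall (0 : StrongDual ℝ Y) 1)) := by
  intro q₀ hq₀
  have key : ∀ q : P × WeakDual ℝ Y, q.2 (w q.1) = q.2 (w q.1 - w q₀.1) + q.2 (w q₀.1) := by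
    intro q; rw [map_sub]; ring
  rw [ContinuousWithinAt]
  have h2 : Tendsto (fun q : P × WeakDual ℝ Y => q.2 (w q₀.1)) (𝓝 q₀) (𝓝 (q₀.2 (w q₀.1))) :=
    ((WeakDual.eval_continuous (w q₀.1)).comp continuous_snd).tendsto q₀
  have h1 : Tendsto (fun q : P × WeakDual ℝ Y => q.2 (w q.1 - w q₀.1))
      (𝓝[Set.univ ×ˢ (WeakDual.toStrongDual ⁻¹' closedBall (0 : StrongDual ℝ Y) 1)] q₀)
      (𝓝 0) := by
    refine squeeze_zero_norm' (a := fun q : P × WeakDual ℝ Y => ‖w q.1 - w q₀.1‖) ?_ ?_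
    · filter_upwards [self_mem_nhdsWithin] with q hq
      have hb : ‖WeakDual.toStrongDual q.2‖ ≤ 1 := by
        simpa [mem_closedBall_zero_iff] using hq.2
      calc ‖q.2 (w q.1 - w q₀.1)‖ ≤ ‖WeakDual.toStrongDual q.2‖ * ‖w q.1 - w q₀.1‖ :=
            (WeakDual.toStrongDual q.2).le_opNorm _
      _ ≤ 1 * ‖w q.1 - w q₀.1‖ := by gcongr
      _ = _ := one_mul _
    · have : Tendsto (fun q : P × WeakDual ℝ Y => ‖w q.1 - w q₀.1‖) (𝓝 q₀)
          (𝓝 ‖w q₀.1 - w q₀.1‖) :=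
        (((hw.comp continuous_fst).sub continuous_const).norm).tendsto q₀
      simpa using this.mono_left nhdsWithin_le_nhds
  have := h1.add (h2.mono_left nhdsWithin_le_nhds)
  simp only [zero_add] at this
  convert this using 2 with q
  exact key q

set_option maxHeartbeats 800000 in
/-- The convex hull of a compact set in a finite-dimensional normed space is compact. -/
private lemma bsaAux_isCompact_convexHull {E : Type*} [NormedAddCommGroup E] [NormedSpace ℝ E]
    [FiniteDimensional ℝ E] {D : Set E} (hD : IsCompact D) :
    IsCompact (convexHull ℝ D) := by
  set m := Module.finrank ℝ E + 1 with hm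
  have key : convexHull ℝ D =
      ⋃ k ∈ Finset.range (m + 1),
        (fun p : (Fin k → ℝ) × (Fin k → E) => ∑ i, p.1 i • p.2 i) ''
          (stdSimplex ℝ (Fin k) ×ˢ Set.univ.pi fun _ : Fin k => D) := by
    apply le_antisymm
    · intro x hx
      obtain ⟨ι, hι, z, w, hzD, haff, hw0, hw1, hsum⟩ :=
        eq_pos_convex_span_of_mem_convexHull hx
      letI := hι
      have hcard : Fintype.card ι ≤ m := by
        have h1 := haff.card_le_finrank_succ
        have h2 : Module.finrank ℝ (vectorSpan ℝ (Set.range z)) ≤ Module.finrank ℝ E :=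
          Submodule.finrank_le _
        omega
      set k := Fintype.card ι with hk
      let e : ι ≃ Fin k := Fintype.equivFin ι
      refine Set.mem_biUnion (?_ : k ∈ Finset.range (m + 1)) ?_
      · simpa using Nat.lt_succ_of_le hcard
      refine ⟨(fun i => w (e.symm i), fun i => z (e.symm i)), ⟨⟨fun i => (hw0 _).le, ?_⟩, ?_⟩, ?_⟩
      · show ∑ i : Fin k, w (e.symm i) = 1
        rw [Fintype.sum_equiv e.symm (fun i => w (e.symm i)) w fun i => rfl]
        exact hw1
      · intro i _
        exact hzD ⟨_, rfl⟩
      · show ∑ i : Fin k, w (e.symm i) • z (e.symm i) = x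
        rw [Fintype.sum_equiv e.symm (fun i => w (e.symm i) • z (e.symm i))
          (fun i => w i • z i) fun i => rfl]
        exact hsum
    · refine Set.iUnion₂_subset fun k _ => ?_
      rintro x ⟨⟨w, z⟩, ⟨⟨hw0, hw1⟩, hz⟩, rfl⟩
      exact (convex_convexHull ℝ D).sum_mem (fun i _ => hw0 i) hw1
        (fun i _ => subset_convexHull ℝ D (hz i (Set.mem_univ i)))
  rw [key]
  refine (Finset.range (m + 1)).finite_toSet.isCompact_biUnion fun k _ => ?_
  refine (((isCompact_stdSimplex (𝕜 := ℝ) (ι := Fin k)).prod (isCompact_univ_pi fun _ => hD)).image ?_)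
  exact continuous_finset_sum _ fun i _ =>
    ((continuous_apply i).comp continuous_fst).smul ((continuous_apply i).comp continuous_snd)

set_option maxHeartbeats 1600000 in
/-- **Necessity part of the characterization of a BSA in `C(X, Y)`.**
If `f⋆ ∈ H` is a best simultaneous approximation to `{f_a}_{a ∈ A}` from the
`n`-dimensional subspace `H ⊆ C(X, Y)`, then for some `1 ≤ k ≤ n + 1` there are
`a₁, …, a_k ∈ A`, `x₁, …, x_k ∈ X` and positive `λ₁, …, λ_k` with sum one
satisfying conditions (i) and (ii). -/
theorem bsa_necessity_CXY
    {X : Type*} [TopologicalSpace X] [CompactSpace X] [T2Space X]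
    {Y : Type*} [NormedAddCommGroup Y] [NormedSpace ℝ Y]
    {A : Type*} [TopologicalSpace A] [CompactSpace A] [T2Space A] [Nonempty A]
    {n : ℕ} (hn : 0 < n)
    (H : Submodule ℝ C(X, Y)) (hH : Module.finrank ℝ H = n)
    (F : A → C(X, Y)) (hF : Continuous F)
    (fs : C(X, Y)) (hfs : fs ∈ H)
    (hBSA : ∀ f ∈ H, (⨆ a : A, ‖F a - fs‖) ≤ ⨆ a : A, ‖F a - f‖) :
    ∃ k : ℕ, 1 ≤ k ∧ k ≤ n + 1 ∧
      ∃ (a : Fin k → A) (x : Fin k → X) (lam : Fin k → ℝ),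
        (∀ i, 0 < lam i) ∧ (∑ i, lam i) = 1 ∧
        (∀ f ∈ H, (∑ i, lam i * ‖F (a i) (x i) - fs (x i)‖) ≤
            ∑ i, lam i * ‖F (a i) (x i) - f (x i)‖) ∧
        (∀ i, ‖F (a i) (x i) - fs (x i)‖ = ‖F (a i) - fs‖ ∧
            ‖F (a i) - fs‖ = ⨆ b : A, ‖F b - fs‖) := by
  classical
  -- `X` is nonempty since `H` has positive dimension
  have hX : Nonempty X := by
    by_contra hX
    haveI : IsEmpty X := not_nonempty_iff.mp hX
    haveI hsub : Subsingleton C(X, Y) :=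
      ⟨fun f g => ContinuousMap.ext fun x => (IsEmpty.false x).elim⟩
    haveI : Subsingleton H := ⟨fun a b => Subtype.ext (hsub.allEq _ _)⟩
    have h0 : Module.finrank ℝ H = 0 := Module.finrank_zero_of_subsingleton
    omega
  obtain ⟨x₀⟩ := hX
  haveI : Nonempty X := ⟨x₀⟩
  -- the sup over `a` is attained
  have hbdd : ∀ f : C(X, Y), ∃ a₀ : A,
      (∀ c : A, ‖F c - f‖ ≤ ‖F a₀ - f‖) ∧ ‖F a₀ - f‖ = ⨆ c : A, ‖F c - f‖ := by
    intro f
    have hc : Continuous fun c : A => ‖F c - f‖ := (hF.sub continuous_const).norm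
    obtain ⟨a₀, -, hmax⟩ :=
      isCompact_univ.exists_isMaxOn Set.univ_nonempty hc.continuousOn
    have hmax' : ∀ c : A, ‖F c - f‖ ≤ ‖F a₀ - f‖ := fun c => hmax (Set.mem_univ c)
    have hba : BddAbove (Set.range fun c : A => ‖F c - f‖) :=
      ⟨‖F a₀ - f‖, by rintro y ⟨c, rfl⟩; exact hmax' c⟩
    exact ⟨a₀, hmax', le_antisymm (le_ciSup hba a₀) (ciSup_le hmax')⟩
  -- the norm of a continuous map is attained
  have hnorm : ∀ g : C(X, Y), ∃ x : X, ‖g x‖ = ‖g‖ := by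
    intro g
    obtain ⟨x₁, -, hmax⟩ := isCompact_univ.exists_isMaxOn Set.univ_nonempty
      (g.continuous.norm.continuousOn)
    refine ⟨x₁, le_antisymm (g.norm_coe_le_norm x₁) ?_⟩
    exact (g.norm_le (norm_nonneg _)).mpr fun x => hmax (Set.mem_univ x)
  obtain ⟨aM, haM, haMr⟩ := hbdd fs
  set r := ⨆ c : A, ‖F c - fs‖ with hrdef
  have hFle : ∀ c : A, ‖F c - fs‖ ≤ r := fun c => haMr ▸ haM c
  have hr0 : 0 ≤ r := haMr ▸ norm_nonneg _
  have hptle : ∀ (c : A) (x : X), ‖F c x - fs x‖ ≤ ‖F c - fs‖ := by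
    intro c x
    simpa [ContinuousMap.sub_apply] using (F c - fs).norm_coe_le_norm x
  rcases hr0.eq_or_lt with hr | hr
  · -- degenerate case `r = 0`
    have hzero : ∀ (c : A) (x : X), ‖F c x - fs x‖ = 0 := by
      intro c x
      have := (hptle c x).trans ((hFle c).trans hr.ge)
      linarith [norm_nonneg (F c x - fs x)]
    have hzero' : ∀ c : A, ‖F c - fs‖ = 0 := by
      intro c
      have := (hFle c).trans hr.ge
      linarith [norm_nonneg (F c - fs)]
    refine ⟨1, le_refl 1, by omega, fun _ => aM, fun _ => x₀, fun _ => 1,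
      fun _ => one_pos, by simp, ?_, ?_⟩
    · intro f hf
      simp only [hzero, one_mul, mul_zero]
      have : ∀ i : Fin 1, (0:ℝ) ≤ 1 * ‖F aM x₀ - f x₀‖ := fun i => by positivity
      calc (∑ _i : Fin 1, (0:ℝ)) = 0 := by simp
      _ ≤ _ := Finset.sum_nonneg fun i _ => by positivity
    · intro i
      refine ⟨by rw [hzero, hzero'], ?_⟩
      rw [hzero']
      exact hr
  -- main case `0 < r`
  · -- the evaluation-difference map
    set u : A × X → Y := fun p => F p.1 p.2 - fs p.2 with hudef
    have huc : Continuous u := by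
      have h1 : Continuous fun p : A × X => F p.1 p.2 := by
        have : Continuous fun p : A × X => ((F p.1 : C(X, Y)), p.2) :=
          (hF.comp continuous_fst).prodMk continuous_snd
        exact continuous_eval.comp this
      exact h1.sub (fs.continuous.comp continuous_snd)
    have hupt : ∀ p : A × X, ‖u p‖ ≤ ‖F p.1 - fs‖ := fun p => hptle p.1 p.2
    have hur : ∀ p : A × X, ‖u p‖ ≤ r := fun p => (hupt p).trans (hFle p.1)
    -- the dual ball, as subset of the weak dual
    set B : Set (WeakDual ℝ Y) :=
      WeakDual.toStrongDual ⁻¹' closedBall (0 : StrongDual ℝ Y) 1 with hBdef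
    have hBcomp : IsCompact B := WeakDual.isCompact_closedBall 0 1
    have hBmem : ∀ g ∈ B, ∀ y : Y, ‖g y‖ ≤ ‖y‖ := by
      intro g hg y
      have h1 : ‖WeakDual.toStrongDual g‖ ≤ 1 := by
        simpa [hBdef, mem_closedBall_zero_iff] using hg
      calc ‖g y‖ ≤ ‖WeakDual.toStrongDual g‖ * ‖y‖ := (WeakDual.toStrongDual g).le_opNorm y
      _ ≤ 1 * ‖y‖ := by gcongr
      _ = ‖y‖ := one_mul _
    set K : Set ((A × X) × WeakDual ℝ Y) := Set.univ ×ˢ B with hKdef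
    have hKcomp : IsCompact K := isCompact_univ.prod hBcomp
    have hKclosed : IsClosed K := isClosed_univ.prod hBcomp.isClosed
    have hEval : ∀ w : A × X → Y, Continuous w →
        ContinuousOn (fun q : (A × X) × WeakDual ℝ Y => q.2 (w q.1)) K :=
      fun w hw => bsaAux_continuousOn_eval w hw
    -- a basis for H
    haveI hfd : FiniteDimensional ℝ H := FiniteDimensional.of_finrank_pos (hH ▸ hn)
    let b : Module.Basis (Fin n) ℝ H := Module.finBasisOfFinrankEq ℝ H hH
    set bc : Fin n → C(X, Y) := fun j => ((b j : H) : C(X, Y)) with hbc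
    -- the compact set of extremal pairs with norming functionals, and its image in ℝⁿ
    set T : Set ((A × X) × WeakDual ℝ Y) :=
      {q | q ∈ K ∧ ‖u q.1‖ = r ∧ q.2 (u q.1) = r} with hTdef
    have hTK : T ⊆ K := fun q hq => hq.1
    have hTcomp : IsCompact T := by
      have h1 : IsClosed (K ∩ (fun q : (A × X) × WeakDual ℝ Y => q.2 (u q.1)) ⁻¹' {r}) :=
        (hEval u huc).preimage_isClosed_of_isClosed hKclosed isClosed_singleton
      have h2 : IsClosed {q : (A × X) × WeakDual ℝ Y | ‖u q.1‖ = r} :=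
        isClosed_eq ((huc.comp continuous_fst).norm) continuous_const
      have hTeq : T = (K ∩ (fun q : (A × X) × WeakDual ℝ Y => q.2 (u q.1)) ⁻¹' {r}) ∩
          {q | ‖u q.1‖ = r} := by
        ext q
        simp only [hTdef, Set.mem_setOf_eq, Set.mem_inter_iff, Set.mem_preimage,
          Set.mem_singleton_iff]
        tauto
      rw [hTeq]
      exact hKcomp.of_isClosed_subset (h1.inter h2) (fun q hq => hq.1.1)
    set Ψ : ((A × X) × WeakDual ℝ Y) → (Fin n → ℝ) := fun q j => q.2 ((bc j) q.1.2) with hΨdef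
    have hΨ : ContinuousOn Ψ K := continuousOn_pi.mpr fun j =>
      hEval (fun p => (bc j) p.2) ((bc j).continuous.comp continuous_snd)
    set D : Set (Fin n → ℝ) := Ψ '' T with hDdef
    have hDcomp : IsCompact D := hTcomp.image_of_continuousOn (hΨ.mono hTK)
    -- Step 1: 0 belongs to the convex hull of D
    have h0D : (0 : Fin n → ℝ) ∈ convexHull ℝ D := by
      by_contra h0
      obtain ⟨ℓ, c, hc1, hc2⟩ := geometric_hahn_banach_closed_point
        (convex_convexHull ℝ D) (bsaAux_isCompact_convexHull hDcomp).isClosed h0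
      have hc0 : c < 0 := by simpa using hc2
      -- the direction of decrease
      set vH : H := ∑ j, ℓ (Pi.single j 1) • b j with hvHdef
      set v : C(X, Y) := (vH : C(X, Y)) with hvdef
      have hvmem : v ∈ H := vH.2
      have hvval : ∀ x : X, v x = ∑ j, ℓ (Pi.single j 1) • (bc j) x := by
        intro x
        have h1 : v = ∑ j, ℓ (Pi.single j 1) • bc j := by
          rw [hvdef, hvHdef]
          push_cast [Submodule.coe_sum, Submodule.coe_smul]
          rfl
        rw [h1, ContinuousMap.sum_apply]
        simp [ContinuousMap.smul_apply]
      have hkey : ∀ q ∈ T, q.2 (v q.1.2) ≤ c := by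
        intro q hq
        have hmem : Ψ q ∈ D := ⟨q, hq, rfl⟩
        have hlt := (hc1 _ (subset_convexHull ℝ D hmem)).le
        have hℓ : ℓ (Ψ q) = q.2 (v q.1.2) := by
          have hone : ∀ j : Fin n, (fun j' => if j = j' then (1 : ℝ) else 0) = Pi.single j 1 := by
            intro j
            ext j'
            by_cases h : j = j' <;> simp [Pi.single_apply, h, eq_comm]
          conv_lhs => rw [pi_eq_sum_univ (Ψ q)]
          rw [map_sum, hvval, map_sum]
          refine Finset.sum_congr rfl fun j _ => ?_
          rw [map_smul, map_smul, hone]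
          simp only [smul_eq_mul, hΨdef]
          ring
        rwa [hℓ] at hlt
      -- contradiction via a minimizing sequence
      have hstep : ∀ j : ℕ, ∃ q : (A × X) × WeakDual ℝ Y, q ∈ K ∧
          r - (1 / (j + 1 : ℝ)) * ‖v‖ ≤ q.2 (u q.1) ∧
          q.2 (u q.1) ≤ ‖u q.1‖ ∧ 0 ≤ q.2 (v q.1.2) := by
        intro j
        set t : ℝ := 1 / (j + 1 : ℝ) with htdef
        have ht : 0 < t := by positivity
        have hfmem : fs - t • v ∈ H := H.sub_mem hfs (H.smul_mem _ hvmem)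
        have hges : r ≤ ⨆ c : A, ‖F c - (fs - t • v)‖ := hBSA _ hfmem
        obtain ⟨a₁, hmax₁, heq₁⟩ := hbdd (fs - t • v)
        have hge₁ : r ≤ ‖F a₁ - (fs - t • v)‖ := heq₁ ▸ hges
        obtain ⟨x₁, hx₁⟩ := hnorm (F a₁ - (fs - t • v))
        have hzval : (F a₁ - (fs - t • v)) x₁ = u (a₁, x₁) + t • v x₁ := by
          simp [hudef, ContinuousMap.sub_apply, ContinuousMap.smul_apply, sub_sub_eq_add_sub]
          abel
        have hznorm : r ≤ ‖u (a₁, x₁) + t • v x₁‖ := by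
          rw [← hzval, hx₁]; exact hge₁
        have hzne : u (a₁, x₁) + t • v x₁ ≠ 0 := by
          intro h
          rw [h, norm_zero] at hznorm
          linarith
        obtain ⟨y₁, hy₁n, hy₁v₀⟩ := exists_dual_vector ℝ _ (norm_ne_zero_iff.mpr hzne)
        have hy₁v : y₁ (u (a₁, x₁) + t • v x₁) = ‖u (a₁, x₁) + t • v x₁‖ := by
          exact_mod_cast hy₁v₀
        have hy₁le : ∀ y : Y, y₁ y ≤ ‖y‖ := by
          intro y
          have h := y₁.le_opNorm y
          rw [hy₁n, one_mul] at h
          exact (le_abs_self _).trans ((Real.norm_eq_abs _) ▸ h)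
        have hadd : y₁ (u (a₁, x₁) + t • v x₁) = y₁ (u (a₁, x₁)) + t * y₁ (v x₁) := by
          rw [map_add, map_smul, smul_eq_mul]
        have hvb : y₁ (v x₁) ≤ ‖v‖ := (hy₁le _).trans (v.norm_coe_le_norm x₁)
        have hub : y₁ (u (a₁, x₁)) ≤ ‖u (a₁, x₁)‖ := hy₁le _
        have hurr := hur (a₁, x₁)
        have hvbt : t * y₁ (v x₁) ≤ t * ‖v‖ := mul_le_mul_of_nonneg_left hvb ht.le
        refine ⟨((a₁, x₁), StrongDual.toWeakDual y₁), ⟨Set.mem_univ _, ?_⟩, ?_, ?_, ?_⟩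
        · show StrongDual.toWeakDual y₁ ∈ B
          simp only [hBdef, Set.mem_preimage, mem_closedBall_zero_iff]
          rw [show WeakDual.toStrongDual (StrongDual.toWeakDual y₁) = y₁ from rfl, hy₁n]
        · show r - t * ‖v‖ ≤ y₁ (u (a₁, x₁))
          linarith
        · show y₁ (u (a₁, x₁)) ≤ ‖u (a₁, x₁)‖
          exact hub
        · show 0 ≤ y₁ (v x₁)
          have h3 : 0 ≤ t * y₁ (v x₁) := by linarith
          by_contra hcon
          push_neg at hcon
          have h4 : t * y₁ (v x₁) < 0 := mul_neg_of_pos_of_neg ht hcon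
          linarith
      choose q hqK hq1 hq2 hq3 using hstep
      -- a cluster point of the sequence
      have hmapK : map q atTop ≤ 𝓟 K := by
        rw [le_principal_iff, mem_map]
        exact Eventually.of_forall hqK
      obtain ⟨qb, hqbK, hqbcl⟩ := hKcomp.exists_clusterPt hmapK
      set L : Filter ℕ := atTop ⊓ comap q (𝓝 qb) with hLdef
      haveI hLne : L.NeBot := by
        rw [hLdef]
        have h1 : NeBot (map q atTop ⊓ 𝓝 qb) := by
          rw [inf_comm]; exact hqbcl
        have h2 : map q (atTop ⊓ comap q (𝓝 qb)) = map q atTop ⊓ 𝓝 qb :=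
          Filter.push_pull q atTop (𝓝 qb)
        have h3 : NeBot (map q (atTop ⊓ comap q (𝓝 qb))) := h2 ▸ h1
        exact h3.of_map
      have hqtend : Tendsto q L (𝓝[K] qb) := by
        rw [tendsto_nhdsWithin_iff]
        exact ⟨tendsto_iff_comap.mpr inf_le_right,
          (Eventually.of_forall hqK).filter_mono inf_le_left⟩
      have htzero : Tendsto (fun j : ℕ => r - (1 / (j + 1 : ℝ)) * ‖v‖) atTop (𝓝 r) := by
        have h1 : Tendsto (fun j : ℕ => (1 / (j + 1 : ℝ)) * ‖v‖) atTop (𝓝 0) := by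
          simpa using tendsto_one_div_add_atTop_nhds_zero_nat.mul_const ‖v‖
        simpa using (tendsto_const_nhds (x := r)).sub h1
      -- evaluate the three continuous quantities at the cluster point
      have hΦ₀ : Tendsto (fun j => (q j).2 (u (q j).1)) L (𝓝 (qb.2 (u qb.1))) :=
        ((hEval u huc) qb hqbK).tendsto.comp hqtend
      have hΦ₁ : Tendsto (fun j => (q j).2 (v (q j).1.2)) L (𝓝 (qb.2 (v qb.1.2))) :=
        ((hEval (fun p => v p.2) (v.continuous.comp continuous_snd)) qb hqbK).tendsto.comp hqtend
      have hge : r ≤ qb.2 (u qb.1) :=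
        le_of_tendsto_of_tendsto' (htzero.mono_left inf_le_left) hΦ₀ hq1
      have hqbB : qb.2 ∈ B := hqbK.2
      have hle : qb.2 (u qb.1) ≤ ‖u qb.1‖ :=
        (le_abs_self _).trans (by rw [← Real.norm_eq_abs]; exact hBmem _ hqbB _)
      have hnormr : ‖u qb.1‖ = r := le_antisymm (hur qb.1) (hge.trans hle)
      have hvalr : qb.2 (u qb.1) = r := le_antisymm (hle.trans_eq hnormr) hge
      have hqbT : qb ∈ T := ⟨hqbK, hnormr, hvalr⟩
      have hpos : 0 ≤ qb.2 (v qb.1.2) :=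
        le_of_tendsto_of_tendsto' (tendsto_const_nhds.mono_left inf_le_left) hΦ₁ hq3
      have hneg := hkey qb hqbT
      linarith
    -- Step 2: Carathéodory
    obtain ⟨ι, hι, z, w, hzD, haff, hw0, hw1, hsum⟩ :=
      eq_pos_convex_span_of_mem_convexHull h0D
    letI := hι
    have hcard : Fintype.card ι ≤ n + 1 := by
      have h1 := haff.card_le_finrank_succ
      have h2 : Module.finrank ℝ (vectorSpan ℝ (Set.range z)) ≤ Module.finrank ℝ (Fin n → ℝ) :=
        Submodule.finrank_le _
      rw [Module.finrank_fin_fun] at h2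
      omega
    haveI hne : Nonempty ι := by
      by_contra hne
      haveI := not_nonempty_iff.mp hne
      rw [Finset.univ_eq_empty, Finset.sum_empty] at hw1
      exact absurd hw1 zero_ne_one
    -- realize the data
    have hreal : ∀ i : ι, ∃ pg : (A × X) × WeakDual ℝ Y,
        (∀ y : Y, ‖pg.2 y‖ ≤ ‖y‖) ∧ ‖u pg.1‖ = r ∧ pg.2 (u pg.1) = r ∧
        ∀ j, z i j = pg.2 ((bc j) pg.1.2) := by
      intro i
      obtain ⟨q', hq'T, hq'⟩ := hzD ⟨i, rfl⟩
      exact ⟨q', fun y => hBmem _ hq'T.1.2 y, hq'T.2.1, hq'T.2.2,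
        fun j => by rw [← hq']⟩
    choose pg hgB hpr hgr hgz using hreal
    set k := Fintype.card ι with hkdef
    let e : Fin k ≃ ι := (Fintype.equivFin ι).symm
    refine ⟨k, Fintype.card_pos, hcard, fun m => (pg (e m)).1.1, fun m => (pg (e m)).1.2,
      fun m => w (e m), fun m => hw0 (e m), ?_, ?_, ?_⟩
    · exact Equiv.sum_comp e w ▸ hw1
    · -- condition (i)
      intro f hf
      have hφmem : f - fs ∈ H := H.sub_mem hf hfs
      set c' : Fin n → ℝ := fun j => b.repr ⟨f - fs, hφmem⟩ j with hc'def
      have hφx : ∀ x : X, f x - fs x = ∑ j, c' j • (bc j) x := by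
        intro x
        have h1 : (⟨f - fs, hφmem⟩ : H) = ∑ j, c' j • b j := (b.sum_repr _).symm
        have h2 : f - fs = ∑ j, c' j • bc j := by
          rw [show f - fs = ((⟨f - fs, hφmem⟩ : H) : C(X, Y)) from rfl, h1]
          push_cast [Submodule.coe_sum, Submodule.coe_smul]
          rfl
        have h3 := congrArg (fun g : C(X, Y) => g x) h2
        simpa [ContinuousMap.sub_apply, ContinuousMap.sum_apply,
          ContinuousMap.smul_apply] using h3
      have hzcol : ∀ j, ∑ i : ι, w i * z i j = 0 := by
        intro j
        have h := congrFun hsum j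
        simpa [Finset.sum_apply, Pi.smul_apply, smul_eq_mul] using h
      have hzero : ∑ i : ι, w i * (pg i).2 (f ((pg i).1.2) - fs ((pg i).1.2)) = 0 := by
        have h1 : ∀ i : ι, (pg i).2 (f ((pg i).1.2) - fs ((pg i).1.2)) =
            ∑ j, c' j * z i j := by
          intro i
          rw [hφx, map_sum]
          refine Finset.sum_congr rfl fun j _ => ?_
          rw [map_smul, ← hgz i j]
          simp [smul_eq_mul]
        calc ∑ i : ι, w i * (pg i).2 (f ((pg i).1.2) - fs ((pg i).1.2))
            = ∑ i : ι, ∑ j, c' j * (w i * z i j) := by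
              refine Finset.sum_congr rfl fun i _ => ?_
              rw [h1 i, Finset.mul_sum]
              exact Finset.sum_congr rfl fun j _ => by ring
          _ = ∑ j, ∑ i : ι, c' j * (w i * z i j) := Finset.sum_comm
          _ = ∑ j, c' j * ∑ i : ι, w i * z i j := by
              refine Finset.sum_congr rfl fun j _ => ?_
              rw [Finset.mul_sum]
          _ = 0 := by simp [hzcol]
      have hgnorm : ∀ (i : ι) (y : Y), (pg i).2 y ≤ ‖y‖ := fun i y =>
        (le_abs_self _).trans (by rw [← Real.norm_eq_abs]; exact hgB i y)
      have hpr' : ∀ i : ι, ‖F (pg i).1.1 ((pg i).1.2) - fs ((pg i).1.2)‖ = r := by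
        intro i
        have := hpr i
        simpa [hudef] using this
      have hgr' : ∀ i : ι, (pg i).2 (F (pg i).1.1 ((pg i).1.2) - fs ((pg i).1.2)) = r := by
        intro i
        have := hgr i
        simpa [hudef] using this
      have hterm : ∀ i : ι, r - (pg i).2 (f ((pg i).1.2) - fs ((pg i).1.2)) ≤
          ‖F (pg i).1.1 ((pg i).1.2) - f ((pg i).1.2)‖ := by
        intro i
        have h1 : F (pg i).1.1 ((pg i).1.2) - f ((pg i).1.2) =
            (F (pg i).1.1 ((pg i).1.2) - fs ((pg i).1.2)) -
              (f ((pg i).1.2) - fs ((pg i).1.2)) := by abel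
        have h2 : (pg i).2 (F (pg i).1.1 ((pg i).1.2) - f ((pg i).1.2)) =
            r - (pg i).2 (f ((pg i).1.2) - fs ((pg i).1.2)) := by
          rw [h1, map_sub, hgr' i]
        have h3 := hgnorm i (F (pg i).1.1 ((pg i).1.2) - f ((pg i).1.2))
        linarith
      have hwr : ∑ i : ι, w i * r = r := by rw [← Finset.sum_mul, hw1, one_mul]
      calc ∑ m : Fin k, w (e m) * ‖F (pg (e m)).1.1 ((pg (e m)).1.2) - fs ((pg (e m)).1.2)‖
          = ∑ i : ι, w i * ‖F (pg i).1.1 ((pg i).1.2) - fs ((pg i).1.2)‖ :=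
            Equiv.sum_comp e (fun i => w i * ‖F (pg i).1.1 ((pg i).1.2) - fs ((pg i).1.2)‖)
        _ = ∑ i : ι, w i * r := Finset.sum_congr rfl fun i _ => by rw [hpr' i]
        _ = r := hwr
        _ = ∑ i : ι, w i * (r - (pg i).2 (f ((pg i).1.2) - fs ((pg i).1.2))) := by
            rw [Finset.sum_congr rfl fun i _ => mul_sub (w i) r _, Finset.sum_sub_distrib,
              hzero, hwr, sub_zero]
        _ ≤ ∑ i : ι, w i * ‖F (pg i).1.1 ((pg i).1.2) - f ((pg i).1.2)‖ :=
            Finset.sum_le_sum fun i _ =>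
              mul_le_mul_of_nonneg_left (hterm i) (hw0 i).le
        _ = ∑ m : Fin k, w (e m) * ‖F (pg (e m)).1.1 ((pg (e m)).1.2) - f ((pg (e m)).1.2)‖ :=
            (Equiv.sum_comp e (fun i => w i * ‖F (pg i).1.1 ((pg i).1.2) - f ((pg i).1.2)‖)).symm
    · -- condition (ii)
      intro m
      set i := e m
      have h1 : ‖F (pg i).1.1 ((pg i).1.2) - fs ((pg i).1.2)‖ = r := hpr i
      have h2 : r ≤ ‖F (pg i).1.1 - fs‖ := h1 ▸ hptle (pg i).1.1 (pg i).1.2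
      have h3 : ‖F (pg i).1.1 - fs‖ = r := le_antisymm (hFle _) h2
      exact ⟨h1.trans h3.symm, h3⟩
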